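/- Fix $\beta$ and $\rho$ with $0 < \beta/(\rho+1)$ and let $\alpha < \beta/(\rho+1)$ with $0 < \alpha \le 1$. Then the function $x(t) = t^\beta \cos(t^{-\rho})$ for $t \in (0,1]$, $x(0) = 0$, is Hölder continuous of exponent $\alpha$ on $[0,1]$: there is $C > 0$ with $|x(s) - x(t)| \le C|s-t|^\alpha$ for all $s,t \in [0,1]$. -/

import Mathlib

open Real Set

private lemma osc_hasDerivAt (β ρ : ℝ) {u : ℝ} (hu : 0 < u) :
    HasDerivAt (fun v : ℝ => v ^ β * Real.cos (v ^ (-ρ)))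
      (β * u ^ (β - 1) * Real.cos (u ^ (-ρ))
        + u ^ β * (-Real.sin (u ^ (-ρ)) * (-ρ * u ^ (-ρ - 1)))) u := by
  have h2 : HasDerivAt (fun v : ℝ => v ^ (-ρ)) (-ρ * u ^ (-ρ - 1)) u :=
    Real.hasDerivAt_rpow_const (Or.inl hu.ne')
  have h3 : HasDerivAt (fun v : ℝ => Real.cos (v ^ (-ρ)))
      (-Real.sin (u ^ (-ρ)) * (-ρ * u ^ (-ρ - 1))) u :=
    (Real.hasDerivAt_cos _).comp u h2
  exact (Real.hasDerivAt_rpow_const (p := β) (Or.inl hu.ne')).mul h3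

private lemma osc_deriv_bound (β ρ : ℝ) (hβ : 0 < β) (hρ : 0 < ρ)
    {t u : ℝ} (ht : 0 < t) (htu : t ≤ u) (hu1 : u ≤ 1) :
    |β * u ^ (β - 1) * Real.cos (u ^ (-ρ))
        + u ^ β * (-Real.sin (u ^ (-ρ)) * (-ρ * u ^ (-ρ - 1)))|
      ≤ (β + ρ) * (t ^ (β - ρ - 1) + 1) := by
  have hu : 0 < u := ht.trans_le htu
  have hb1 : |β * u ^ (β - 1) * Real.cos (u ^ (-ρ))| ≤ β * u ^ (β - 1) := by
    rw [abs_mul, abs_of_nonneg (by positivity : (0:ℝ) ≤ β * u ^ (β - 1))]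
    exact mul_le_of_le_one_right (by positivity) (abs_cos_le_one _)
  have hb2 : |u ^ β * (-Real.sin (u ^ (-ρ)) * (-ρ * u ^ (-ρ - 1)))|
      ≤ ρ * u ^ (β - ρ - 1) := by
    have : u ^ β * u ^ (-ρ - 1) = u ^ (β - ρ - 1) := by
      rw [← Real.rpow_add hu]; ring_nf
    calc |u ^ β * (-Real.sin (u ^ (-ρ)) * (-ρ * u ^ (-ρ - 1)))|
        = u ^ β * |Real.sin (u ^ (-ρ))| * (ρ * u ^ (-ρ - 1)) := by
          rw [abs_mul, abs_mul, abs_mul, abs_neg, abs_neg,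
            abs_of_nonneg (Real.rpow_nonneg hu.le β),
            abs_of_nonneg hρ.le, abs_of_nonneg (Real.rpow_nonneg hu.le (-ρ - 1))]
          ring
      _ ≤ u ^ β * 1 * (ρ * u ^ (-ρ - 1)) := by
          gcongr
          exact abs_sin_le_one _
      _ = ρ * u ^ (β - ρ - 1) := by rw [← this]; ring
  have hmono : u ^ (β - 1) ≤ u ^ (β - ρ - 1) :=
    Real.rpow_le_rpow_of_exponent_ge hu hu1 (by linarith)
  have hub : u ^ (β - ρ - 1) ≤ t ^ (β - ρ - 1) + 1 := by
    rcases le_or_gt (β - ρ - 1) 0 with hle | hgt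
    · have := Real.rpow_le_rpow_of_nonpos ht htu hle
      have := Real.rpow_nonneg hu.le (β - ρ - 1)
      linarith
    · have h1 : u ^ (β - ρ - 1) ≤ 1 := Real.rpow_le_one hu.le hu1 hgt.le
      have := Real.rpow_nonneg ht.le (β - ρ - 1)
      linarith
  calc |β * u ^ (β - 1) * Real.cos (u ^ (-ρ))
        + u ^ β * (-Real.sin (u ^ (-ρ)) * (-ρ * u ^ (-ρ - 1)))|
      ≤ β * u ^ (β - 1) + ρ * u ^ (β - ρ - 1) :=
        (abs_add_le _ _).trans (add_le_add hb1 hb2)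
    _ ≤ β * u ^ (β - ρ - 1) + ρ * u ^ (β - ρ - 1) := by nlinarith
    _ = (β + ρ) * u ^ (β - ρ - 1) := by ring
    _ ≤ (β + ρ) * (t ^ (β - ρ - 1) + 1) := by nlinarith

set_option maxHeartbeats 1000000 in
/-- Hölder regularity of the oscillatory function `t^β cos(t^{-ρ})`: if
`0 < α ≤ 1` and `α < β/(ρ+1)`, then `x(t) = t^β cos(t^{-ρ})` (with `x(0)=0`) is
Hölder of exponent `α` on `[0,1]`. -/
theorem oscillatory_function_holder (β ρ α : ℝ)
    (hβ : 0 < β) (hρ : 0 < ρ) (hα₀ : 0 < α) (hα₁ : α ≤ 1)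
    (hα : α < β / (ρ + 1))
    (x : ℝ → ℝ)
    (hx : ∀ t : ℝ, 0 < t → x t = t ^ β * Real.cos (t ^ (-ρ)))
    (hx0 : x 0 = 0) :
    ∃ C > 0, ∀ s ∈ Set.Icc (0 : ℝ) 1, ∀ t ∈ Set.Icc (0 : ℝ) 1,
      |x s - x t| ≤ C * |s - t| ^ α := by
  have hρ1 : (0:ℝ) < ρ + 1 := by linarith
  set C : ℝ := 2 ^ β + 1 + 2 * (β + ρ) with hCdef
  have hC : 0 < C := by
    have : (0:ℝ) < (2:ℝ) ^ β := Real.rpow_pos_of_pos (by norm_num) β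
    rw [hCdef]; linarith
  -- pointwise bound
  have hbnd : ∀ t ∈ Icc (0:ℝ) 1, |x t| ≤ t ^ β := by
    intro t ht
    rcases eq_or_lt_of_le ht.1 with h0 | h0
    · rw [← h0, hx0]
      simp [Real.zero_rpow hβ.ne']
    · rw [hx t h0, abs_mul, abs_of_nonneg (Real.rpow_nonneg h0.le β)]
      nlinarith [abs_cos_le_one (t ^ (-ρ)), Real.rpow_nonneg h0.le β,
        abs_nonneg (Real.cos (t ^ (-ρ)))]
  -- main estimate for ordered pairs
  have key : ∀ t s : ℝ, 0 ≤ t → t ≤ s → s ≤ 1 → |x s - x t| ≤ C * (s - t) ^ α := by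
    intro t s ht0 hts hs1
    set h : ℝ := s - t with hh
    have hh0 : 0 ≤ h := by simp [hh]; linarith
    have hh1 : h ≤ 1 := by simp [hh]; linarith
    rcases eq_or_lt_of_le hts with heq | hlt
    · rw [heq]
      simp only [sub_self, abs_zero]
      positivity
    have hhpos : 0 < h := by simp [hh]; linarith
    have hhα : 0 < h ^ α := Real.rpow_pos_of_pos hhpos α
    rcases le_or_gt (t ^ (ρ + 1)) h with hcase | hcase
    · -- far regime: direct bound
      have ht1 : t ≤ 1 := hts.trans hs1
      have hs0 : 0 ≤ s := ht0.trans hts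
      have htβ : t ^ β ≤ h ^ α := by
        have e1 : t ^ β = (t ^ (ρ + 1)) ^ (β / (ρ + 1)) := by
          rw [← Real.rpow_mul ht0]
          congr 1
          field_simp
        calc t ^ β = (t ^ (ρ + 1)) ^ (β / (ρ + 1)) := e1
          _ ≤ h ^ (β / (ρ + 1)) :=
            Real.rpow_le_rpow (Real.rpow_nonneg ht0 _) hcase (by positivity)
          _ ≤ h ^ α := Real.rpow_le_rpow_of_exponent_ge hhpos hh1 hα.le
      have hsle : s ≤ 2 * h ^ ((1:ℝ) / (ρ + 1)) := by
        have e1 : t ≤ h ^ ((1:ℝ) / (ρ + 1)) := by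
          have : t = (t ^ (ρ + 1)) ^ ((1:ℝ) / (ρ + 1)) := by
            rw [← Real.rpow_mul ht0]
            rw [mul_one_div, div_self hρ1.ne', Real.rpow_one]
          rw [this]
          exact Real.rpow_le_rpow (Real.rpow_nonneg ht0 _) hcase (by positivity)
        have e2 : h ≤ h ^ ((1:ℝ) / (ρ + 1)) := by
          have : (1:ℝ) / (ρ + 1) ≤ 1 := by
            rw [div_le_one hρ1]; linarith
          calc h = h ^ (1:ℝ) := (Real.rpow_one h).symm
            _ ≤ h ^ ((1:ℝ) / (ρ + 1)) :=
              Real.rpow_le_rpow_of_exponent_ge hhpos hh1 this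
        have : s = t + h := by simp [hh]
        linarith
      have hsβ : s ^ β ≤ 2 ^ β * h ^ α := by
        calc s ^ β ≤ (2 * h ^ ((1:ℝ) / (ρ + 1))) ^ β :=
              Real.rpow_le_rpow hs0 hsle hβ.le
          _ = 2 ^ β * (h ^ ((1:ℝ) / (ρ + 1))) ^ β := by
              rw [Real.mul_rpow (by norm_num) (Real.rpow_nonneg hh0 _)]
          _ = 2 ^ β * h ^ (β / (ρ + 1)) := by
              rw [← Real.rpow_mul hh0]
              congr 1
              ring
          _ ≤ 2 ^ β * h ^ α := by
              have := Real.rpow_le_rpow_of_exponent_ge hhpos hh1 hα.le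
              have h2 : (0:ℝ) < (2:ℝ) ^ β := Real.rpow_pos_of_pos (by norm_num) β
              nlinarith
      have b1 := hbnd s ⟨hs0, hs1⟩
      have b2 := hbnd t ⟨ht0, ht1⟩
      have : |x s - x t| ≤ |x s| + |x t| := abs_sub _ _
      have hβρ : (0:ℝ) < β + ρ := by linarith
      calc |x s - x t| ≤ s ^ β + t ^ β := by linarith
        _ ≤ (2 ^ β + 1) * h ^ α := by linarith
        _ ≤ C * h ^ α := by
            have : (2:ℝ) ^ β + 1 ≤ C := by rw [hCdef]; nlinarith
            nlinarith
    · -- near regime: MVT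
      have htpos : 0 < t := by
        by_contra hne
        push_neg at hne
        have : t = 0 := le_antisymm hne ht0
        rw [this, Real.zero_rpow hρ1.ne'] at hcase
        linarith
      set M : ℝ := (β + ρ) * (t ^ (β - ρ - 1) + 1) with hM
      have hmvt : |x s - x t| ≤ M * (s - t) := by
        have conv : Convex ℝ (Icc t s) := convex_Icc t s
        have hd : ∀ u ∈ Icc t s,
            HasDerivWithinAt x
              (β * u ^ (β - 1) * Real.cos (u ^ (-ρ))
                + u ^ β * (-Real.sin (u ^ (-ρ)) * (-ρ * u ^ (-ρ - 1)))) (Icc t s) u := by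
          intro u hu
          have hupos : 0 < u := htpos.trans_le hu.1
          exact ((osc_hasDerivAt β ρ hupos).hasDerivWithinAt).congr
            (fun v hv => hx v (htpos.trans_le hv.1)) (hx u hupos)
        have hbd : ∀ u ∈ Icc t s,
            ‖β * u ^ (β - 1) * Real.cos (u ^ (-ρ))
              + u ^ β * (-Real.sin (u ^ (-ρ)) * (-ρ * u ^ (-ρ - 1)))‖ ≤ M := by
          intro u hu
          exact osc_deriv_bound β ρ hβ hρ htpos hu.1 (hu.2.trans hs1)
        have := conv.norm_image_sub_le_of_norm_hasDerivWithin_le hd hbd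
          (left_mem_Icc.mpr hts) (right_mem_Icc.mpr hts)
        simpa [Real.norm_eq_abs, abs_of_nonneg hh0, abs_of_nonneg (sub_nonneg.mpr hts)] using this
      -- convert M * h to C * h^α
      have hsplit : h = h ^ α * h ^ (1 - α) := by
        rw [← Real.rpow_add hhpos, add_sub_cancel, Real.rpow_one]
      have hkey1 : t ^ (β - ρ - 1) * h ^ (1 - α) ≤ 1 := by
        have e1 : h ^ (1 - α) ≤ (t ^ (ρ + 1)) ^ (1 - α) :=
          Real.rpow_le_rpow hh0 hcase.le (by linarith)
        have e2 : t ^ (β - ρ - 1) * (t ^ (ρ + 1)) ^ (1 - α)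
            = t ^ (β - α * (ρ + 1)) := by
          rw [← Real.rpow_mul ht0, ← Real.rpow_add htpos]
          congr 1; ring
        have e3 : t ^ (β - α * (ρ + 1)) ≤ 1 := by
          apply Real.rpow_le_one ht0 (hts.trans hs1)
          have : α * (ρ + 1) < β := (lt_div_iff₀ hρ1).mp hα
          linarith
        calc t ^ (β - ρ - 1) * h ^ (1 - α)
            ≤ t ^ (β - ρ - 1) * (t ^ (ρ + 1)) ^ (1 - α) := by
              nlinarith [Real.rpow_nonneg htpos.le (β - ρ - 1)]
          _ = t ^ (β - α * (ρ + 1)) := e2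
          _ ≤ 1 := e3
      have hkey2 : h ≤ h ^ α := by
        calc h = h ^ (1:ℝ) := (Real.rpow_one h).symm
          _ ≤ h ^ α := Real.rpow_le_rpow_of_exponent_ge hhpos hh1 hα₁
      have hMh : M * h ≤ 2 * (β + ρ) * h ^ α := by
        have e1 : t ^ (β - ρ - 1) * h ≤ h ^ α := by
          calc t ^ (β - ρ - 1) * h = t ^ (β - ρ - 1) * h ^ (1 - α) * h ^ α := by
                rw [mul_assoc, mul_comm (h ^ (1 - α)), ← hsplit]
            _ ≤ 1 * h ^ α := by nlinarith
            _ = h ^ α := one_mul _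
        have hβρ : (0:ℝ) < β + ρ := by linarith
        calc M * h = (β + ρ) * (t ^ (β - ρ - 1) * h + h) := by rw [hM]; ring
          _ ≤ (β + ρ) * (h ^ α + h ^ α) := by nlinarith
          _ = 2 * (β + ρ) * h ^ α := by ring
      have h2β : (0:ℝ) < (2:ℝ) ^ β := Real.rpow_pos_of_pos (by norm_num) β
      calc |x s - x t| ≤ M * (s - t) := hmvt
        _ = M * h := by rw [hh]
        _ ≤ 2 * (β + ρ) * h ^ α := hMh
        _ ≤ C * h ^ α := by
            have : 2 * (β + ρ) ≤ C := by rw [hCdef]; nlinarith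
            nlinarith
  refine ⟨C, hC, fun s hs t ht => ?_⟩
  rcases le_total t s with hts | hst
  · have := key t s ht.1 hts hs.2
    rwa [abs_of_nonneg (by linarith : (0:ℝ) ≤ s - t)]
  · have := key s t hs.1 hst ht.2
    rw [abs_sub_comm, abs_sub_comm s t]
    rwa [abs_of_nonneg (by linarith : (0:ℝ) ≤ t - s)]
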